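/- Let ℒ = Φ ∂_x Φ^{−1} where Φ = 1 + Σ_{s≥1} φ_s(x)∂_x^{−s} is a wave operator, ψ = Φ e^{kx} the wave function and ψ⁺ = (e^{−kx})Φ^{−1} the dual wave function. Then the coefficients J_s of the expansion ψ⁺ψ = 1 + Σ_{s≥2} J_s k^{−s} satisfy J_{n+1} = res_∂ ℒⁿ for every n ≥ 1. -/

import Mathlib

/-!
STATEMENT 9: Let ℒ = Φ∂Φ^{−1} with Φ = 1 + Σ_{s≥1} φ_s ∂^{−s} a wave operator,
ψ = Φe^{kx}, ψ⁺ = (e^{−kx})Φ^{−1}.  Then the coefficients J_s of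
ψ⁺ψ = 1 + Σ_{s≥2} J_s k^{−s} satisfy J_{n+1} = res_∂ ℒⁿ for every n ≥ 1.

Pseudodifferential operators `(N, c)` represent `Σ c s ∂^{N-s}`.
`ψ⁺ψ` is the product of the formal Laurent series in k given by the right-adjoint
symbol of Φ^{−1} and the (left) symbol of Φ, and `J_{n+1}` is its `k^{−(n+1)}`
coefficient.
-/

noncomputable section

def PsDO : Type := ℤ × (ℕ → PowerSeries ℂ)

namespace PsDO

def gbin (n : ℤ) (j : ℕ) : ℂ :=
  (∏ i ∈ Finset.range j, ((n : ℂ) - (i : ℂ))) / (j.factorial : ℂ)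

def coeffAt (A : PsDO) (n : ℤ) : PowerSeries ℂ :=
  if n ≤ A.1 then A.2 (A.1 - n).toNat else 0

def mul (A B : PsDO) : PsDO :=
  (A.1 + B.1, fun t => ∑ s ∈ Finset.range (t + 1), ∑ j ∈ Finset.range (t + 1 - s),
    A.2 s * PowerSeries.C (gbin (A.1 - s) j) *
      (PowerSeries.derivativeFun)^[j] (B.2 (t - s - j)))

def one : PsDO := (0, fun s => if s = 0 then 1 else 0)

def Dx : PsDO := (1, fun s => if s = 0 then 1 else 0)

def pow (A : PsDO) (n : ℕ) : PsDO := (mul A)^[n] one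

def rightSym (A : PsDO) : PsDO :=
  (A.1, fun t => ∑ j ∈ Finset.range (t + 1),
    PowerSeries.C ((-1 : ℂ) ^ j * gbin (A.1 - (t - j)) j) *
      (PowerSeries.derivativeFun)^[j] (A.2 (t - j)))

def smul (A B : PsDO) : PsDO :=
  (A.1 + B.1, fun t => ∑ s ∈ Finset.range (t + 1), A.2 s * B.2 (t - s))

def res (A : PsDO) : PowerSeries ℂ := coeffAt A (-1)

end PsDO

open PsDO

namespace PsDOAux
open Finset PowerSeries

local notation "dd" => (PowerSeries.derivativeFun : ℂ⟦X⟧ → ℂ⟦X⟧)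

variable {M : Type*} [AddCommMonoid M]




/-- generalized binomial with complex argument -/
noncomputable def g (x : ℂ) (j : ℕ) : ℂ :=
  (∏ i ∈ Finset.range j, (x - (i : ℂ))) / (j.factorial : ℂ)

lemma g_zero (x : ℂ) : g x 0 = 1 := by simp [g]

lemma g_succ (x : ℂ) (j : ℕ) :
    g x (j + 1) * ((j : ℂ) + 1) = g x j * (x - j) := by
  have hj : (j.factorial : ℂ) ≠ 0 := Nat.cast_ne_zero.2 j.factorial_ne_zero
  have hj1 : ((j : ℂ) + 1) ≠ 0 := by
    exact_mod_cast (Nat.cast_ne_zero (R := ℂ)).2 (Nat.succ_ne_zero j)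
  unfold g
  rw [Finset.prod_range_succ, Nat.factorial_succ]
  push_cast
  field_simp [g, Finset.prod_range_succ, Nat.factorial_succ]

lemma g_step (x : ℂ) (j : ℕ) :
    (x - j) * g x j = ((j : ℂ) + 1) * g x (j + 1) := by
  linear_combination -g_succ x j

/-- Vandermonde identity for generalized binomial coefficients. -/
lemma g_vandermonde (x y : ℂ) (m : ℕ) :
    g (x + y) m = ∑ i ∈ range (m + 1), g x i * g y (m - i) := by
  induction m with
  | zero => simp [g_zero]
  | succ m ih =>
    have hm1 : ((m : ℂ) + 1) ≠ 0 := by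
      exact_mod_cast (Nat.cast_ne_zero (R := ℂ)).2 (Nat.succ_ne_zero m)
    apply mul_left_cancel₀ hm1
    have key : ((m : ℂ) + 1) * g (x + y) (m + 1) = (x + y - m) * g (x + y) m :=
      (g_step (x + y) m).symm
    rw [key, ih, Finset.mul_sum, Finset.mul_sum]
    have hterm : ∀ i ∈ range (m + 1),
        (x + y - m) * (g x i * g y (m - i)) =
          ((i : ℂ) + 1) * g x (i + 1) * g y (m - i)
            + (((m : ℂ) + 1) - i) * (g x i * g y (m - i + 1)) := by
      intro i hi
      have hi' : i ≤ m := by simpa [Nat.lt_succ_iff] using hi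
      have hcast : ((m - i : ℕ) : ℂ) = (m : ℂ) - i := by
        push_cast [Nat.cast_sub hi']; ring
      have h1 : (x - i) * g x i = ((i : ℂ) + 1) * g x (i + 1) := g_step x i
      have h2 : (y - ((m - i : ℕ) : ℂ)) * g y (m - i) =
          (((m - i : ℕ) : ℂ) + 1) * g y (m - i + 1) := g_step y (m - i)
      linear_combination (g y (m - i)) * h1 + (g x i) * h2 +
        (g x i * g y (m - i) + g x i * g y (m - i + 1)) * hcast
    rw [Finset.sum_congr rfl hterm, Finset.sum_add_distrib]
    have e1 : ∑ i ∈ range (m + 1), ((i : ℂ) + 1) * g x (i + 1) * g y (m - i)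
        = ∑ i ∈ range (m + 2), (i : ℂ) * g x i * g y (m + 1 - i) := by
      rw [Finset.sum_range_succ' (fun i => (i : ℂ) * g x i * g y (m + 1 - i)) (m+1)]
      simp only [Nat.cast_zero, zero_mul, mul_zero, add_zero]
      apply Finset.sum_congr rfl
      intro i hi
      have h : m + 1 - (i + 1) = m - i := by omega
      rw [h]; push_cast; ring
    have e2 : ∑ i ∈ range (m + 2), (((m : ℂ) + 1) - i) * (g x i * g y (m + 1 - i))
        = ∑ i ∈ range (m + 1), (((m : ℂ) + 1) - i) * (g x i * g y (m - i + 1)) := by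
      rw [Finset.sum_range_succ]
      have hz : (((m : ℂ) + 1) - ((m + 1 : ℕ) : ℂ)) = 0 := by push_cast; ring
      rw [hz, zero_mul, add_zero]
      apply Finset.sum_congr rfl
      intro i hi
      have hi' : i ≤ m := by simpa [Nat.lt_succ_iff] using hi
      have h : m + 1 - i = m - i + 1 := by omega
      rw [h]
    rw [e1, ← e2, ← Finset.sum_add_distrib]
    apply Finset.sum_congr rfl
    intro i hi
    ring

/-- absorption identity -/
lemma g_absorb (x : ℂ) (p k : ℕ) :
    g x (p + k) * (((p + k).choose p : ℕ) : ℂ) = g x p * g (x - p) k := by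
  have hsplit : (∏ i ∈ range (p + k), (x - (i : ℂ)))
      = (∏ i ∈ range p, (x - (i : ℂ))) * ∏ i ∈ range k, (x - (p : ℂ) - i) := by
    rw [Finset.prod_range_add]
    congr 1
    apply Finset.prod_congr rfl
    intro i _
    push_cast; ring
  have hp : ((p.factorial : ℕ) : ℂ) ≠ 0 := Nat.cast_ne_zero.2 p.factorial_ne_zero
  have hk : ((k.factorial : ℕ) : ℂ) ≠ 0 := Nat.cast_ne_zero.2 k.factorial_ne_zero
  have hpk : (((p + k).factorial : ℕ) : ℂ) ≠ 0 := Nat.cast_ne_zero.2 (p + k).factorial_ne_zero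
  have hchoose : (((p + k).choose p : ℕ) : ℂ) * (p.factorial : ℂ) * (k.factorial : ℂ)
      = ((p + k).factorial : ℂ) := by
    have h := Nat.choose_mul_factorial_mul_factorial (Nat.le_add_right p k)
    have h2 : (p + k).choose p * p.factorial * (p + k - p).factorial = (p + k).factorial := h
    rw [Nat.add_sub_cancel_left] at h2
    exact_mod_cast congrArg (Nat.cast : ℕ → ℂ) h2
  unfold g
  rw [hsplit]
  field_simp
  linear_combination ((∏ i ∈ range p, (x - (i:ℂ))) * ∏ i ∈ range k, (x - (p:ℂ) - i)) * hchoose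

/-- reflection identity -/
lemma g_reflect (x : ℂ) (j : ℕ) :
    (-1 : ℂ) ^ j * g x j = g ((j : ℂ) - 1 - x) j := by
  unfold g
  rw [← Finset.prod_range_reflect (fun i => ((j : ℂ) - 1 - x) - i) j]
  have h : ∀ i ∈ range j, ((j:ℂ) - 1 - x) - ((j - 1 - i : ℕ) : ℂ) = (-1) * (x - i) := by
    intro i hi
    have hi' : i < j := Finset.mem_range.1 hi
    have hc : ((j - 1 - i : ℕ) : ℂ) = (j : ℂ) - 1 - i := by
      have h1 : j - 1 - i = j - (1 + i) := by omega
      rw [h1]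
      push_cast [Nat.cast_sub (by omega : 1 + i ≤ j)]
      ring
    rw [hc]; ring
  rw [Finset.prod_congr rfl h, Finset.prod_mul_distrib, Finset.prod_const, Finset.card_range]
  ring




lemma d_mul (f h : ℂ⟦X⟧) : dd (f * h) = dd f * h + f * dd h := by
  rw [PowerSeries.derivativeFun_mul]
  rw [smul_eq_mul, smul_eq_mul]
  ring

lemma d_C_mul (a : ℂ) (f : ℂ⟦X⟧) : dd (PowerSeries.C a * f) = PowerSeries.C a * dd f := by
  rw [d_mul, show dd (PowerSeries.C a) = 0 from PowerSeries.derivative_C]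
  ring

lemma iter_d_C_mul (n : ℕ) (a : ℂ) (f : ℂ⟦X⟧) :
    dd^[n] (PowerSeries.C a * f) = PowerSeries.C a * dd^[n] f := by
  induction n generalizing f with
  | zero => simp
  | succ n ih => rw [Function.iterate_succ_apply, d_C_mul, ih, ← Function.iterate_succ_apply]

lemma d_zero : dd 0 = 0 := by
  have h : dd (PowerSeries.C (0:ℂ)) = 0 := PowerSeries.derivative_C
  simpa using h

lemma iter_d_zero (n : ℕ) : dd^[n] 0 = 0 := by
  induction n with
  | zero => rfl
  | succ n ih => rw [Function.iterate_succ_apply, d_zero, ih]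

lemma iter_d_one (n : ℕ) (hn : 1 ≤ n) : dd^[n] 1 = 0 := by
  obtain ⟨m, rfl⟩ : ∃ m, n = m + 1 := ⟨n - 1, by omega⟩
  rw [Function.iterate_succ_apply, PowerSeries.derivativeFun_one, iter_d_zero]

lemma d_sum {ι : Type*} (s : Finset ι) (f : ι → ℂ⟦X⟧) :
    dd (∑ i ∈ s, f i) = ∑ i ∈ s, dd (f i) := by
  induction s using Finset.cons_induction with
  | empty => simpa using d_zero
  | cons i s hi ih => rw [Finset.sum_cons, Finset.sum_cons, PowerSeries.derivativeFun_add, ih]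

lemma iter_d_sum {ι : Type*} (n : ℕ) (s : Finset ι) (f : ι → ℂ⟦X⟧) :
    dd^[n] (∑ i ∈ s, f i) = ∑ i ∈ s, dd^[n] (f i) := by
  induction n generalizing f with
  | zero => simp
  | succ n ih =>
    rw [Function.iterate_succ_apply, d_sum, ih]
    apply Finset.sum_congr rfl
    intro i _
    rw [← Function.iterate_succ_apply]

lemma iter_d_leibniz (n : ℕ) (f h : ℂ⟦X⟧) :
    dd^[n] (f * h) = ∑ i ∈ range (n + 1),
      PowerSeries.C ((n.choose i : ℕ) : ℂ) * (dd^[i] f * dd^[n - i] h) := by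
  induction n with
  | zero => simp
  | succ n ih =>
    rw [Function.iterate_succ_apply', ih, d_sum]
    have hterm : ∀ i ∈ range (n + 1),
        dd (PowerSeries.C ((n.choose i : ℕ) : ℂ) * (dd^[i] f * dd^[n - i] h)) =
          PowerSeries.C ((n.choose i : ℕ) : ℂ) * (dd^[i+1] f * dd^[n - i] h)
          + PowerSeries.C ((n.choose i : ℕ) : ℂ) * (dd^[i] f * dd^[(n - i) + 1] h) := by
      intro i hi
      rw [d_C_mul, d_mul, mul_add]
      rw [Function.iterate_succ_apply' dd i f, Function.iterate_succ_apply' dd (n-i) h]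
    rw [Finset.sum_congr rfl hterm, Finset.sum_add_distrib]
    have e1 : ∑ i ∈ range (n + 1),
          PowerSeries.C ((n.choose i : ℕ) : ℂ) * (dd^[i+1] f * dd^[n - i] h)
        = ∑ i ∈ range (n + 2),
          PowerSeries.C (if i = 0 then 0 else ((n.choose (i - 1) : ℕ) : ℂ)) *
            (dd^[i] f * dd^[n + 1 - i] h) := by
      rw [Finset.sum_range_succ' (fun i => PowerSeries.C (if i = 0 then 0 else ((n.choose (i - 1) : ℕ) : ℂ)) *
            (dd^[i] f * dd^[n + 1 - i] h)) (n+1)]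
      norm_num
      apply Finset.sum_congr rfl
      intro i hi
      have h1 : n + 1 - (i + 1) = n - i := by omega
      rw [h1]
    have e2 : ∑ i ∈ range (n + 2),
          PowerSeries.C ((n.choose i : ℕ) : ℂ) * (dd^[i] f * dd^[n + 1 - i] h)
        = ∑ i ∈ range (n + 1),
          PowerSeries.C ((n.choose i : ℕ) : ℂ) * (dd^[i] f * dd^[(n - i) + 1] h) := by
      rw [Finset.sum_range_succ]
      have hz : ((n.choose (n+1) : ℕ) : ℂ) = 0 := by
        rw [Nat.choose_eq_zero_of_lt (by omega)]; simp
      rw [hz]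
      simp only [map_zero, zero_mul, add_zero]
      apply Finset.sum_congr rfl
      intro i hi
      have hi' : i ≤ n := by simpa [Nat.lt_succ_iff] using hi
      have h1 : n + 1 - i = n - i + 1 := by omega
      rw [h1]
    rw [e1, ← e2, ← Finset.sum_add_distrib]
    apply Finset.sum_congr rfl
    intro i hi
    rw [← add_mul, ← map_add]
    congr 2
    rcases Nat.eq_zero_or_pos i with h0 | h0
    · subst h0; simp
    · obtain ⟨i', rfl⟩ : ∃ i', i = i' + 1 := ⟨i - 1, by omega⟩
      rw [if_neg (Nat.succ_ne_zero i'), Nat.add_sub_cancel, Nat.choose_succ_succ' n i']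
      push_cast; ring




lemma reindex4 (t : ℕ) (F : ℕ → ℕ → ℕ → ℕ → M) :
    (∑ s ∈ range (t+1), ∑ q ∈ range (t+1-s), ∑ u ∈ range (s+1), ∑ p ∈ range (s+1-u),
      F s q u p)
    = ∑ u ∈ range (t+1), ∑ p ∈ range (t+1-u), ∑ v ∈ range (t+1-u-p),
        ∑ q ∈ range (t+1-u-p-v), F (u+p+v) q u p := by
  rw [Finset.sum_sigma', Finset.sum_sigma', Finset.sum_sigma']
  conv_rhs => rw [Finset.sum_sigma', Finset.sum_sigma', Finset.sum_sigma']
  apply Finset.sum_nbij'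
    (i := fun z => ⟨⟨⟨z.1.2, z.2⟩, z.1.1.1 - z.1.2 - z.2⟩, z.1.1.2⟩)
    (j := fun w => ⟨⟨⟨w.1.1.1 + w.1.1.2 + w.1.2, w.2⟩, w.1.1.1⟩, w.1.1.2⟩)
  · intro a ha
    simp only [Finset.mem_sigma, Finset.mem_range] at ha ⊢
    omega
  · intro a ha
    simp only [Finset.mem_sigma, Finset.mem_range] at ha ⊢
    omega
  · intro a ha
    simp only [Finset.mem_sigma, Finset.mem_range] at ha
    obtain ⟨⟨⟨s, q⟩, u⟩, p⟩ := a
    simp only at ha ⊢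
    have h1 : u + p + (s - u - p) = s := by omega
    simp [h1]
  · intro a ha
    simp only [Finset.mem_sigma, Finset.mem_range] at ha
    obtain ⟨⟨⟨u, p⟩, v⟩, q⟩ := a
    simp only at ha ⊢
    have h1 : u + p + v - u - p = v := by omega
    simp [h1]
  · intro a ha
    simp only [Finset.mem_sigma, Finset.mem_range] at ha
    obtain ⟨⟨⟨s, q⟩, u⟩, p⟩ := a
    simp only at ha ⊢
    have h1 : u + p + (s - u - p) = s := by omega
    rw [h1]

lemma reindex5 (T : ℕ) (F : ℕ → ℕ → ℕ → ℕ → M) :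
    (∑ p ∈ range (T+1), ∑ v ∈ range (T+1-p), ∑ q ∈ range (T+1-p-v), ∑ r ∈ range (q+1),
      F p v q r)
    = ∑ m ∈ range (T+1), ∑ v ∈ range (T+1-m), ∑ j ∈ range (T+1-m-v), ∑ p ∈ range (m+1),
        F p v ((m-p)+j) (m-p) := by
  rw [Finset.sum_sigma', Finset.sum_sigma', Finset.sum_sigma']
  conv_rhs => rw [Finset.sum_sigma', Finset.sum_sigma', Finset.sum_sigma']
  apply Finset.sum_nbij'
    (i := fun z => ⟨⟨⟨z.1.1.1 + z.2, z.1.1.2⟩, z.1.2 - z.2⟩, z.1.1.1⟩)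
    (j := fun w => ⟨⟨⟨w.2, w.1.1.2⟩, (w.1.1.1 - w.2) + w.1.2⟩, w.1.1.1 - w.2⟩)
  · intro a ha
    simp only [Finset.mem_sigma, Finset.mem_range] at ha ⊢
    omega
  · intro a ha
    simp only [Finset.mem_sigma, Finset.mem_range] at ha ⊢
    omega
  · intro a ha
    simp only [Finset.mem_sigma, Finset.mem_range] at ha
    obtain ⟨⟨⟨p, v⟩, q⟩, r⟩ := a
    simp only at ha ⊢
    have h1 : p + r - p = r := by omega
    have h2 : r + (q - r) = q := by omega
    simp [h1, h2]
  · intro a ha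
    simp only [Finset.mem_sigma, Finset.mem_range] at ha
    obtain ⟨⟨⟨m, v⟩, j⟩, p⟩ := a
    simp only at ha ⊢
    have h1 : p + (m - p) = m := by omega
    have h2 : m - p + j - (m - p) = j := by omega
    simp [h1, h2]
  · intro a ha
    simp only [Finset.mem_sigma, Finset.mem_range] at ha
    obtain ⟨⟨⟨p, v⟩, q⟩, r⟩ := a
    simp only at ha ⊢
    have h1 : p + r - p = r := by omega
    have h2 : r + (q - r) = q := by omega
    rw [h1, h2]



open PsDO



lemma gbin_cast (n : ℤ) (j : ℕ) : gbin n j = g (n : ℂ) j := rfl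

lemma gbin_arg {a b : ℤ} (h : a = b) (j : ℕ) : gbin a j = gbin b j := by rw [h]

lemma gbin_zero (n : ℤ) : gbin n 0 = 1 := by rw [gbin_cast, g_zero]

lemma gbin_vander (a b : ℤ) (m : ℕ) :
    gbin (a + b) m = ∑ i ∈ range (m + 1), gbin a i * gbin b (m - i) := by
  rw [gbin_cast]
  have h : ((a + b : ℤ) : ℂ) = (a : ℂ) + (b : ℂ) := by push_cast; ring
  rw [h, g_vandermonde]
  rfl

lemma gbin_absorb (z : ℤ) (p k : ℕ) :
    gbin z (p + k) * (((p + k).choose p : ℕ) : ℂ) = gbin z p * gbin (z - (p : ℤ)) k := by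
  rw [gbin_cast, gbin_cast, gbin_cast]
  have h : ((z - (p : ℤ) : ℤ) : ℂ) = (z : ℂ) - (p : ℂ) := by push_cast; ring
  rw [h, g_absorb]

lemma gbin_reflect (z : ℤ) (j : ℕ) :
    (-1 : ℂ) ^ j * gbin z j = gbin ((j : ℤ) - 1 - z) j := by
  rw [gbin_cast, gbin_cast]
  have h : (((j : ℤ) - 1 - z : ℤ) : ℂ) = (j : ℂ) - 1 - (z : ℂ) := by push_cast; ring
  rw [h, g_reflect]

lemma mul_fst (A B : PsDO) : (mul A B).1 = A.1 + B.1 := rfl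

lemma mul_snd (A B : PsDO) (t : ℕ) :
    (mul A B).2 t = ∑ s ∈ range (t + 1), ∑ j ∈ range (t + 1 - s),
      A.2 s * PowerSeries.C (gbin (A.1 - s) j) * dd^[j] (B.2 (t - s - j)) := rfl

lemma iter_d_ite (j : ℕ) (hj : 1 ≤ j) (P : Prop) [Decidable P] :
    dd^[j] (if P then (1 : ℂ⟦X⟧) else 0) = 0 := by
  split
  · exact iter_d_one j hj
  · exact iter_d_zero j

/-- multiplying by `∂^m` on the right shifts the order. -/
lemma mul_delta (A : PsDO) (m : ℤ) :
    mul A (m, fun s => if s = 0 then (1 : ℂ⟦X⟧) else 0) = (A.1 + m, A.2) := by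
  apply Prod.ext
  · rfl
  · funext t
    rw [show ((A.1 + m, A.2) : PsDO).2 = A.2 from rfl]
    refine (mul_snd _ _ _).trans ?_
    simp only [show ((m, fun s => if s = 0 then (1:PowerSeries ℂ) else 0) : PsDO).2
      = (fun s => if s = 0 then (1:PowerSeries ℂ) else 0) from rfl]
    rw [Finset.sum_eq_single t]
    · have h1 : t + 1 - t = 1 := by omega
      rw [h1]
      rw [Finset.sum_range_one]
      have h2 : t - t - 0 = 0 := by omega
      rw [h2, if_pos rfl, gbin_zero]
      simp
    · intro s hs hne
      apply Finset.sum_eq_zero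
      intro j hj
      rcases Nat.eq_zero_or_pos j with h0 | h0
      · subst h0
        have : t - s - 0 ≠ 0 := by
          simp only [Finset.mem_range] at hs; omega
        rw [if_neg this]
        simp [iter_d_zero]
      · rw [iter_d_ite j h0]
        simp
    · intro h
      exact absurd (Finset.self_mem_range_succ t) h

lemma mul_one' (A : PsDO) : mul A one = (A.1, A.2) := by
  have h := mul_delta A 0
  simpa [one] using h

/-- the second component of a product does not depend on the order of the right factor. -/
lemma mul_shift (A B : PsDO) (z : ℤ) :
    mul A (B.1 + z, B.2) = (A.1 + B.1 + z, (mul A B).2) := by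
  apply Prod.ext
  · show A.1 + (B.1 + z) = A.1 + B.1 + z
    ring
  · rfl




lemma mul_assoc' (A B C : PsDO) : mul (mul A B) C = mul A (mul B C) := by
  apply Prod.ext
  · show A.1 + B.1 + C.1 = A.1 + (B.1 + C.1)
    ring
  · funext t
    calc (mul (mul A B) C).2 t
        = ∑ s ∈ range (t+1), ∑ q ∈ range (t+1-s),
            (∑ u ∈ range (s+1), ∑ p ∈ range (s+1-u),
              A.2 u * PowerSeries.C (gbin (A.1 - u) p) * dd^[p] (B.2 (s-u-p)))
            * PowerSeries.C (gbin (A.1 + B.1 - s) q) * dd^[q] (C.2 (t-s-q)) := rfl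
      _ = ∑ s ∈ range (t+1), ∑ q ∈ range (t+1-s), ∑ u ∈ range (s+1), ∑ p ∈ range (s+1-u),
            A.2 u * PowerSeries.C (gbin (A.1 - u) p) * dd^[p] (B.2 (s-u-p))
            * PowerSeries.C (gbin (A.1 + B.1 - s) q) * dd^[q] (C.2 (t-s-q)) := by
          apply Finset.sum_congr rfl; intro s _
          apply Finset.sum_congr rfl; intro q _
          simp only [Finset.sum_mul]
      _ = ∑ u ∈ range (t+1), ∑ p ∈ range (t+1-u), ∑ v ∈ range (t+1-u-p),
            ∑ q ∈ range (t+1-u-p-v),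
            A.2 u * PowerSeries.C (gbin (A.1 - u) p) * dd^[p] (B.2 (u+p+v-u-p))
            * PowerSeries.C (gbin (A.1 + B.1 - (u+p+v : ℕ)) q) * dd^[q] (C.2 (t-(u+p+v)-q)) :=
          reindex4 t (fun s q u p =>
            A.2 u * PowerSeries.C (gbin (A.1 - u) p) * dd^[p] (B.2 (s-u-p))
            * PowerSeries.C (gbin (A.1 + B.1 - s) q) * dd^[q] (C.2 (t-s-q)))
      -- canonical form N
      _ = ∑ u ∈ range (t+1), ∑ p ∈ range (t+1-u), ∑ v ∈ range (t+1-u-p),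
            ∑ q ∈ range (t+1-u-p-v),
            A.2 u * PowerSeries.C (gbin (A.1 - u) p * gbin (A.1 - u - p + (B.1 - v)) q)
              * (dd^[p] (B.2 v) * dd^[q] (C.2 (t-u-p-v-q))) := by
          apply Finset.sum_congr rfl; intro u hu
          apply Finset.sum_congr rfl; intro p hp
          apply Finset.sum_congr rfl; intro v hv
          apply Finset.sum_congr rfl; intro q hq
          rw [show u+p+v-u-p = v from by omega, show t-(u+p+v)-q = t-u-p-v-q from by omega,
            gbin_arg (show A.1 + B.1 - (u+p+v : ℕ) = A.1 - u - p + (B.1 - v) from by push_cast; ring) q,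
            map_mul]
          ring
      -- N = E
      _ = ∑ u ∈ range (t+1), ∑ m ∈ range ((t-u)+1), ∑ v ∈ range ((t-u)+1-m),
            ∑ j ∈ range ((t-u)+1-m-v), ∑ p ∈ range (m+1),
            A.2 u * PowerSeries.C (gbin (A.1 - u) m * ((m.choose p : ℕ) : ℂ) * gbin (B.1 - v) j)
              * (dd^[p] (B.2 v) * dd^[(m-p)+j] (C.2 (t-u-m-v-j))) := by
          apply Finset.sum_congr rfl; intro u hu
          have hu' : u ≤ t := by simpa [Nat.lt_succ_iff] using hu
          rw [show t+1-u = (t-u)+1 from by omega]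
          calc (∑ p ∈ range ((t-u)+1), ∑ v ∈ range ((t-u)+1-p), ∑ q ∈ range ((t-u)+1-p-v),
                  A.2 u * PowerSeries.C (gbin (A.1 - u) p * gbin (A.1 - u - p + (B.1 - v)) q)
                    * (dd^[p] (B.2 v) * dd^[q] (C.2 (t-u-p-v-q))))
              = ∑ p ∈ range ((t-u)+1), ∑ v ∈ range ((t-u)+1-p), ∑ q ∈ range ((t-u)+1-p-v),
                  ∑ r ∈ range (q+1),
                  A.2 u * PowerSeries.C (gbin (A.1 - u) (p+r) * (((p+r).choose p : ℕ) : ℂ)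
                      * gbin (B.1 - v) (q-r))
                    * (dd^[p] (B.2 v) * dd^[q] (C.2 (t-u-p-v-q))) := by
                apply Finset.sum_congr rfl; intro p hp
                apply Finset.sum_congr rfl; intro v hv
                apply Finset.sum_congr rfl; intro q hq
                rw [gbin_vander (A.1 - u - p) (B.1 - v) q, Finset.mul_sum, map_sum,
                  Finset.mul_sum, Finset.sum_mul]
                apply Finset.sum_congr rfl; intro r hr
                rw [gbin_absorb (A.1 - u) p r, mul_assoc (gbin (A.1-u) p)]
            _ = ∑ m ∈ range ((t-u)+1), ∑ v ∈ range ((t-u)+1-m), ∑ j ∈ range ((t-u)+1-m-v),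
                  ∑ p ∈ range (m+1),
                  A.2 u * PowerSeries.C (gbin (A.1 - u) (p+(m-p)) * (((p+(m-p)).choose p : ℕ) : ℂ)
                      * gbin (B.1 - v) (((m-p)+j)-(m-p)))
                    * (dd^[p] (B.2 v) * dd^[(m-p)+j] (C.2 (t-u-p-v-((m-p)+j)))) :=
                reindex5 (t-u) (fun p v q r =>
                  A.2 u * PowerSeries.C (gbin (A.1 - u) (p+r) * (((p+r).choose p : ℕ) : ℂ)
                      * gbin (B.1 - v) (q-r))
                    * (dd^[p] (B.2 v) * dd^[q] (C.2 (t-u-p-v-q))))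
            _ = ∑ m ∈ range ((t-u)+1), ∑ v ∈ range ((t-u)+1-m), ∑ j ∈ range ((t-u)+1-m-v),
                  ∑ p ∈ range (m+1),
                  A.2 u * PowerSeries.C (gbin (A.1 - u) m * ((m.choose p : ℕ) : ℂ)
                      * gbin (B.1 - v) j)
                    * (dd^[p] (B.2 v) * dd^[(m-p)+j] (C.2 (t-u-m-v-j))) := by
                apply Finset.sum_congr rfl; intro m hm
                apply Finset.sum_congr rfl; intro v hv
                apply Finset.sum_congr rfl; intro j hj
                apply Finset.sum_congr rfl; intro p hp
                have hp' : p ≤ m := by simpa [Nat.lt_succ_iff] using hp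
                rw [show p+(m-p) = m from by omega, show ((m-p)+j)-(m-p) = j from by omega,
                  show t-u-p-v-((m-p)+j) = t-u-m-v-j from by omega]
      -- E = RHS
      _ = (mul A (mul B C)).2 t := by
          have hrfl : (mul A (mul B C)).2 t
              = ∑ u ∈ range (t+1), ∑ m ∈ range (t+1-u),
                A.2 u * PowerSeries.C (gbin (A.1 - u) m) * dd^[m] ((mul B C).2 (t-u-m)) := rfl
          rw [hrfl]
          apply Finset.sum_congr rfl; intro u hu
          have hu' : u ≤ t := by simpa [Nat.lt_succ_iff] using hu
          rw [show t+1-u = (t-u)+1 from by omega]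
          apply Finset.sum_congr rfl; intro m hm
          have hm' : m ≤ t-u := by simpa [Nat.lt_succ_iff] using hm
          rw [mul_snd B C (t-u-m), iter_d_sum, Finset.mul_sum]
          rw [show (t-u-m)+1 = (t-u)+1-m from by omega]
          apply Finset.sum_congr rfl; intro v hv
          rw [iter_d_sum, Finset.mul_sum]
          apply Finset.sum_congr rfl; intro j hj
          rw [show B.2 v * PowerSeries.C (gbin (B.1 - v) j) * dd^[j] (C.2 (t-u-m-v-j))
              = PowerSeries.C (gbin (B.1 - v) j) * (B.2 v * dd^[j] (C.2 (t-u-m-v-j)))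
            from by ring]
          rw [iter_d_C_mul, iter_d_leibniz]
          simp only [← Function.iterate_add_apply]
          rw [Finset.mul_sum, Finset.mul_sum]
          apply Finset.sum_congr rfl; intro p hp
          rw [map_mul, map_mul]
          ring



lemma eq_one (X : PsDO) (h0 : X.1 = 0) (h : ∀ n : ℤ, coeffAt X n = coeffAt one n) :
    X = one := by
  apply Prod.ext
  · exact h0
  · funext s
    have hh := h (-(s : ℤ))
    rw [coeffAt, coeffAt] at hh
    have c1 : -(s : ℤ) ≤ X.1 := by rw [h0]; omega
    have c2 : -(s : ℤ) ≤ (one : PsDO).1 := by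
      show -(s : ℤ) ≤ (0 : ℤ); omega
    rw [if_pos c1, if_pos c2, h0] at hh
    have e1 : ((0 : ℤ) - -(s:ℤ)).toNat = s := by omega
    have e2 : (((one : PsDO).1) - -(s:ℤ)).toNat = s := by
      show ((0:ℤ) - -(s:ℤ)).toNat = s; omega
    rw [e1, e2] at hh
    exact hh

lemma coeffAt_eq (X : PsDO) (z : ℤ) (k : ℕ) (h1 : z ≤ X.1) (h2 : (X.1 - z).toNat = k) :
    coeffAt X z = X.2 k := by rw [coeffAt, if_pos h1, h2]

lemma pow_L (Φ Ψ : PsDO) (hΦord : Φ.1 = 0) (hΨord : Ψ.1 = 0)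
    (hΨΦ : mul Ψ Φ = one) (m : ℕ) :
    pow (mul (mul Φ Dx) Ψ) (m + 1) = mul ((((m+1 : ℕ)) : ℤ), Φ.2) Ψ := by
  have hΦD : mul Φ Dx = (((1:ℕ) : ℤ), Φ.2) := by
    have h := mul_delta Φ 1
    rw [show Dx = ((1:ℤ), fun s => if s = 0 then (1 : PowerSeries ℂ) else 0) from rfl, h, hΦord]
    norm_num
    rfl
  induction m with
  | zero =>
    show mul (mul (mul Φ Dx) Ψ) one = _
    rw [mul_one']
    exact congrArg (fun X => mul X Ψ) hΦD
  | succ m ih =>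
    have hstep : pow (mul (mul Φ Dx) Ψ) (m + 1 + 1)
        = mul (mul (mul Φ Dx) Ψ) (pow (mul (mul Φ Dx) Ψ) (m + 1)) :=
      Function.iterate_succ_apply' _ _ _
    rw [hstep, ih, hΦD]
    refine (mul_assoc' _ _ _).trans ?_
    refine (congrArg (mul _) (mul_assoc' Ψ ((((m+1 : ℕ)) : ℤ), Φ.2) Ψ).symm).trans ?_
    have hshift : mul Ψ ((((m+1 : ℕ)) : ℤ), Φ.2) = ((((m+1 : ℕ)) : ℤ), (one : PsDO).2) := by
      have h := mul_shift Ψ Φ (((m+1 : ℕ)) : ℤ)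
      simp only [hΦord, hΨord, hΨΦ, zero_add] at h
      exact h
    refine (congrArg (fun X => mul _ (mul X Ψ)) hshift).trans ?_
    refine (mul_assoc' (((1:ℕ):ℤ), Φ.2) ((((m+1 : ℕ)) : ℤ), (one : PsDO).2) Ψ).symm.trans ?_
    have hdelta : mul ((((1:ℕ)):ℤ), Φ.2) ((((m+1 : ℕ)) : ℤ), (one : PsDO).2)
        = ((((m+1+1 : ℕ)) : ℤ), Φ.2) := by
      have h := mul_delta ((((1:ℕ)):ℤ), Φ.2) (((m+1 : ℕ)) : ℤ)
      refine h.trans ?_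
      apply Prod.ext
      · show ((1:ℕ):ℤ) + ((m+1:ℕ) : ℤ) = ((m+1+1 : ℕ) : ℤ)
        push_cast; ring
      · rfl
    exact congrArg (fun X => mul X Ψ) hdelta

theorem stmt9' (Φ Ψ : PsDO)
    (hΦord : Φ.1 = 0) (hΦ0 : Φ.2 0 = 1)
    (hΨord : Ψ.1 = 0) (hΨ0 : Ψ.2 0 = 1)
    (hinv₁ : ∀ n : ℤ, coeffAt (mul Φ Ψ) n = coeffAt one n)
    (hinv₂ : ∀ n : ℤ, coeffAt (mul Ψ Φ) n = coeffAt one n) :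
    ∀ n : ℕ, 1 ≤ n →
      coeffAt (smul (rightSym Ψ) Φ) (-(n : ℤ) - 1) =
        res (pow (mul (mul Φ Dx) Ψ) n) := by
  intro n hn
  obtain ⟨m, rfl⟩ : ∃ m : ℕ, n = m + 1 := ⟨n - 1, by omega⟩
  have hΨΦ : mul Ψ Φ = one :=
    eq_one _ (by rw [mul_fst, hΨord, hΦord]; ring) hinv₂
  rw [show res (pow (mul (mul Φ Dx) Ψ) (m+1))
      = coeffAt (pow (mul (mul Φ Dx) Ψ) (m+1)) (-1) from rfl]
  rw [pow_L Φ Ψ hΦord hΨord hΨΦ m]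
  -- reduce coeffAt on both sides
  have hfstL : (smul (rightSym Ψ) Φ).1 = 0 := by
    show Ψ.1 + Φ.1 = 0; rw [hΨord, hΦord]; ring
  have hfstR : (mul ((((m+1:ℕ)) : ℤ), Φ.2) Ψ).1 = (((m+1:ℕ)) : ℤ) := by
    show (((m+1:ℕ)) : ℤ) + Ψ.1 = (((m+1:ℕ)) : ℤ); rw [hΨord]; ring
  rw [coeffAt_eq (smul (rightSym Ψ) Φ) (-((m+1 : ℕ) : ℤ) - 1) (m+2)
    (by rw [hfstL]; omega) (by rw [hfstL]; omega)]
  rw [coeffAt_eq (mul ((((m+1:ℕ)) : ℤ), Φ.2) Ψ) (-1) (m+2)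
    (by rw [hfstR]; omega) (by rw [hfstR]; omega)]
  refine Eq.trans ?_ (mul_snd _ _ _).symm
  simp only [show ((((m+1:ℕ)) : ℤ), Φ.2).2 = Φ.2 from rfl,
    show (((((m+1:ℕ)) : ℤ), Φ.2) : PsDO).1 = (((m+1:ℕ)) : ℤ) from rfl]
  refine (show (smul (rightSym Ψ) Φ).2 (m+2)
      = ∑ s ∈ range (m+2+1),
          (∑ j ∈ range (s+1), PowerSeries.C ((-1 : ℂ) ^ j * gbin (Ψ.1 - (s - j)) j)
            * dd^[j] (Ψ.2 (s - j))) * Φ.2 (m+2-s) from rfl).trans ?_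
  rw [← Finset.sum_range_reflect (fun s =>
      (∑ j ∈ range (s+1), PowerSeries.C ((-1 : ℂ) ^ j * gbin (Ψ.1 - (s - j)) j)
        * dd^[j] (Ψ.2 (s - j))) * Φ.2 (m+2-s)) (m+2+1)]
  apply Finset.sum_congr rfl
  intro s hs
  have hs' : s ≤ m+2 := by simpa [Nat.lt_succ_iff] using hs
  rw [show m+2+1-1-s = m+2-s from by omega]
  rw [show m+2-(m+2-s) = s from by omega]
  rw [show (m+2-s)+1 = m+2+1-s from by omega]
  rw [Finset.sum_mul]
  apply Finset.sum_congr rfl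
  intro j hj
  have hj' : j ≤ m+2-s := by
    have := Finset.mem_range.1 hj; omega
  rw [hΨord]
  rw [gbin_reflect ((0:ℤ) - (((m+2-s : ℕ) : ℤ) - ((j:ℕ) : ℤ))) j]
  rw [gbin_arg (show ((j:ℕ) : ℤ) - 1 - ((0:ℤ) - (((m+2-s : ℕ) : ℤ) - ((j:ℕ) : ℤ)))
      = (((m+1:ℕ)) : ℤ) - ((s:ℕ) : ℤ) from by omega) j]
  ring


end PsDOAux

/-- `Φ` is the wave operator, `Ψ` its two-sided inverse,
`ℒ = Φ ∘ ∂ ∘ Φ^{−1}`. -/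
theorem stmt9 (Φ Ψ : PsDO)
    (hΦord : Φ.1 = 0) (hΦ0 : Φ.2 0 = 1)
    (hΨord : Ψ.1 = 0) (hΨ0 : Ψ.2 0 = 1)
    (hinv₁ : ∀ n : ℤ, coeffAt (mul Φ Ψ) n = coeffAt one n)
    (hinv₂ : ∀ n : ℤ, coeffAt (mul Ψ Φ) n = coeffAt one n) :
    ∀ n : ℕ, 1 ≤ n →
      coeffAt (smul (rightSym Ψ) Φ) (-(n : ℤ) - 1) =
        res (pow (mul (mul Φ Dx) Ψ) n) :=
  PsDOAux.stmt9' Φ Ψ hΦord hΦ0 hΨord hΨ0 hinv₁ hinv₂
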